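/- For every x=(x₂,x₃)∈ℝ² with x₂² ≠ x₃² and x₃ ≠ 0, the function B' satisfies (HB')(x) = 2i·B'(x), where H is the operator (Hg)(x) = (−i/(4π))·(∂²g/∂x₂² − ∂²g/∂x₃²)(x) + πi·(x₂²−x₃²)·g(x). (From the proof of paper Proposition 5.12.) -/

import Mathlib

open MeasureTheory

lemma deriv_lin_exp (a c σ k t : ℝ) :
    deriv (fun s : ℝ => (a*s + c) * Real.exp (σ*s^2 + k)) t
      = (a + (a*t+c)*(2*σ*t)) * Real.exp (σ*t^2+k) := by
  have hg : HasDerivAt (fun s : ℝ => σ*s^2 + k) (2*σ*t) t := by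
    have h := ((hasDerivAt_pow 2 t).const_mul σ).add_const k
    refine h.congr_deriv ?_
    push_cast; ring
  have h3 : HasDerivAt (fun s : ℝ => a*s + c) a t := by
    have h := ((hasDerivAt_id t).const_mul a).add_const c
    refine h.congr_deriv ?_
    simp
  rw [(h3.fun_mul hg.exp).deriv]; ring

lemma deriv_quad_exp (p q r σ k t : ℝ) :
    deriv (fun s : ℝ => (p*s^2 + q*s + r) * Real.exp (σ*s^2 + k)) t
      = ((2*p*t + q) + (p*t^2+q*t+r)*(2*σ*t)) * Real.exp (σ*t^2+k) := by
  have hg : HasDerivAt (fun s : ℝ => σ*s^2 + k) (2*σ*t) t := by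
    have h := ((hasDerivAt_pow 2 t).const_mul σ).add_const k
    refine h.congr_deriv ?_
    push_cast; ring
  have h3 : HasDerivAt (fun s : ℝ => p*s^2 + q*s + r) (2*p*t + q) t := by
    have h := (((hasDerivAt_pow 2 t).const_mul p).add
      ((hasDerivAt_id t).const_mul q)).add_const r
    refine h.congr_deriv ?_
    push_cast; ring
  rw [(h3.fun_mul hg.exp).deriv]; ring

lemma deriv2_lin_exp (a c σ k t : ℝ) :
    deriv (deriv (fun s : ℝ => (a*s + c) * Real.exp (σ*s^2 + k))) t
      = (2*σ*(a*t+c) + 4*σ*t*a + 4*σ^2*t^2*(a*t+c)) * Real.exp (σ*t^2+k) := by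
  rw [show deriv (fun s : ℝ => (a*s + c) * Real.exp (σ*s^2 + k))
      = fun s : ℝ => ((2*σ*a)*s^2 + (2*σ*c)*s + a) * Real.exp (σ*s^2+k) from
    funext fun s => by rw [deriv_lin_exp]; ring]
  rw [deriv_quad_exp]; ring

lemma min_abs (u v : ℝ) (h : v^2 < u^2) : min |u - v| |u + v| = |u| - |v| := by
  have h' : |v| < |u| := by
    rw [← Real.sqrt_sq_eq_abs, ← Real.sqrt_sq_eq_abs]
    exact Real.sqrt_lt_sqrt (sq_nonneg v) h
  rcases le_total 0 u with hu | hu <;> rcases le_total 0 v with hv | hv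
  · rw [abs_of_nonneg hu, abs_of_nonneg hv] at h' ⊢
    rw [abs_of_nonneg (by linarith), abs_of_nonneg (by linarith), min_eq_left (by linarith)]
  · rw [abs_of_nonneg hu, abs_of_nonpos hv] at h' ⊢
    rw [abs_of_nonneg (by linarith), abs_of_nonneg (by linarith), min_eq_right (by linarith)]
    ring
  · rw [abs_of_nonpos hu, abs_of_nonneg hv] at h' ⊢
    rw [abs_of_nonpos (by linarith), abs_of_nonpos (by linarith), min_eq_right (by linarith)]
    ring
  · rw [abs_of_nonpos hu, abs_of_nonpos hv] at h' ⊢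
    rw [abs_of_nonpos (by linarith), abs_of_nonpos (by linarith), min_eq_left (by linarith)]
    ring

lemma abs_eq_sgn (e t : ℝ) (he : e = 1 ∨ e = -1) (h : 0 < e * t) : |t| = e * t := by
  rcases he with rfl | rfl
  · rw [one_mul] at *; exact abs_of_pos h
  · rw [abs_of_neg (by linarith)]; ring


/-- The `e₃`-component `B'` of the singular function `ψ̃'₀,₁`. -/
noncomputable def B' (x : ℝ × ℝ) : ℝ :=
  if x.1 ^ 2 - x.2 ^ 2 > 0 then
    (1/2) * min |x.1 - x.2| |x.1 + x.2| * Real.exp (-(Real.pi * (x.1 ^ 2 - x.2 ^ 2)))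
  else 0

/-- The infinitesimal generator `H` of `SO(2)` in the Weil representation attached to the
signature `(1,1)` plane, acting on a real-valued function `g` on `ℝ²`:
`(Hg)(x) = (-i/(4π))·(∂²g/∂x₂² - ∂²g/∂x₃²)(x) + πi·(x₂²-x₃²)·g(x)`. -/
noncomputable def Hop (g : ℝ × ℝ → ℝ) (x : ℝ × ℝ) : ℂ :=
  (-Complex.I / (4 * (Real.pi : ℂ))) *
    ((deriv (deriv (fun t : ℝ => g (t, x.2))) x.1
      - deriv (deriv (fun t : ℝ => g (x.1, t))) x.2 : ℝ) : ℂ)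
  + (Real.pi : ℂ) * Complex.I * ((x.1 ^ 2 - x.2 ^ 2 : ℝ) : ℂ) * ((g x : ℝ) : ℂ)

/-- From the proof of paper Proposition 5.12: outside the light-cone and the set
`x₃ = 0`, the function `B'` satisfies `(HB')(x) = 2i·B'(x)`. -/
theorem stmt12 (x : ℝ × ℝ) (hx : x.1 ^ 2 ≠ x.2 ^ 2) (hx3 : x.2 ≠ 0) :
    Hop B' x = 2 * Complex.I * ((B' x : ℝ) : ℂ) := by
  rcases hx.lt_or_gt with h | h
  · -- inside the light cone: B' vanishes near x
    have hB : B' x = 0 := by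
      rw [B', if_neg (by push_neg; nlinarith)]
    have h1 : (fun t : ℝ => B' (t, x.2)) =ᶠ[nhds x.1] (fun _ => (0:ℝ)) := by
      have ho : IsOpen {t : ℝ | t^2 < x.2^2} :=
        isOpen_lt (continuous_pow 2) continuous_const
      filter_upwards [ho.mem_nhds (by exact h)] with t ht
      rw [B', if_neg (by push_neg; dsimp only; nlinarith [show t^2 < x.2^2 from ht])]
    have h2 : (fun t : ℝ => B' (x.1, t)) =ᶠ[nhds x.2] (fun _ => (0:ℝ)) := by
      have ho : IsOpen {t : ℝ | x.1^2 < t^2} :=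
        isOpen_lt continuous_const (continuous_pow 2)
      filter_upwards [ho.mem_nhds (by exact h)] with t ht
      rw [B', if_neg (by push_neg; dsimp only; nlinarith [show x.1^2 < t^2 from ht])]
    have hd1 : deriv (deriv (fun t : ℝ => B' (t, x.2))) x.1 = 0 := by
      rw [(h1.deriv).deriv_eq]
      simp
    have hd2 : deriv (deriv (fun t : ℝ => B' (x.1, t))) x.2 = 0 := by
      rw [(h2.deriv).deriv_eq]
      simp
    rw [Hop, hd1, hd2, hB]
    simp
  · -- outside the light cone
    have hx1 : x.1 ≠ 0 := by
      intro h0; rw [h0] at h; simp at h; nlinarith [sq_nonneg x.2]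
    set e : ℝ := if 0 < x.1 then 1 else -1 with hedef
    set d : ℝ := if 0 < x.2 then 1 else -1 with hddef
    have he : e = 1 ∨ e = -1 := by
      rw [hedef]; split <;> simp
    have hd : d = 1 ∨ d = -1 := by
      rw [hddef]; split <;> simp
    have he1 : 0 < e * x.1 := by
      rw [hedef]; split
      · next h' => simpa using h'
      · next h' =>
        push_neg at h'
        have : x.1 < 0 := lt_of_le_of_ne h' hx1
        nlinarith
    have hd1p : 0 < d * x.2 := by
      rw [hddef]; split
      · next h' => simpa using h'
      · next h' =>
        push_neg at h'
        have : x.2 < 0 := lt_of_le_of_ne h' hx3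
        nlinarith
    have habs1 : |x.1| = e * x.1 := abs_eq_sgn e x.1 he he1
    have habs2 : |x.2| = d * x.2 := abs_eq_sgn d x.2 hd hd1p
    have hB : B' x = ((e/2)*x.1 + (-(d*x.2)/2)) * Real.exp (-Real.pi*x.1^2 + Real.pi*x.2^2) := by
      rw [B', if_pos (by linarith : x.1^2 - x.2^2 > 0), min_abs _ _ h, habs1, habs2,
        show -(Real.pi*(x.1^2-x.2^2)) = -Real.pi*x.1^2 + Real.pi*x.2^2 by ring]
      ring
    have hE1 : (fun t : ℝ => B' (t, x.2)) =ᶠ[nhds x.1]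
        (fun t : ℝ => ((e/2)*t + (-(d*x.2)/2)) * Real.exp (-Real.pi*t^2 + Real.pi*x.2^2)) := by
      have ho : IsOpen {t : ℝ | x.2^2 < t^2 ∧ 0 < e*t} :=
        (isOpen_lt continuous_const (continuous_pow 2)).inter
          (isOpen_lt continuous_const (continuous_const.mul continuous_id))
      filter_upwards [ho.mem_nhds ⟨h, he1⟩] with t ht
      obtain ⟨ht1, ht2⟩ := ht
      rw [B']
      dsimp only
      rw [if_pos (by linarith : t^2 - x.2^2 > 0), min_abs _ _ ht1, abs_eq_sgn e t he ht2, habs2,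
        show -(Real.pi*(t^2-x.2^2)) = -Real.pi*t^2 + Real.pi*x.2^2 by ring]
      ring
    have hE2 : (fun t : ℝ => B' (x.1, t)) =ᶠ[nhds x.2]
        (fun t : ℝ => ((-d/2)*t + (e*x.1/2)) * Real.exp (Real.pi*t^2 + -Real.pi*x.1^2)) := by
      have ho : IsOpen {t : ℝ | t^2 < x.1^2 ∧ 0 < d*t} :=
        (isOpen_lt (continuous_pow 2) continuous_const).inter
          (isOpen_lt continuous_const (continuous_const.mul continuous_id))
      filter_upwards [ho.mem_nhds ⟨h, hd1p⟩] with t ht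
      obtain ⟨ht1, ht2⟩ := ht
      rw [B']
      dsimp only
      rw [if_pos (by linarith : x.1^2 - t^2 > 0), min_abs _ _ ht1, habs1, abs_eq_sgn d t hd ht2,
        show -(Real.pi*(x.1^2-t^2)) = Real.pi*t^2 + -Real.pi*x.1^2 by ring]
      ring
    have hd1 : deriv (deriv (fun t : ℝ => B' (t, x.2))) x.1
        = (2*(-Real.pi)*((e/2)*x.1+(-(d*x.2)/2)) + 4*(-Real.pi)*x.1*(e/2)
            + 4*(-Real.pi)^2*x.1^2*((e/2)*x.1+(-(d*x.2)/2)))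
          * Real.exp (-Real.pi*x.1^2 + Real.pi*x.2^2) := by
      rw [(hE1.deriv).deriv_eq]
      exact deriv2_lin_exp (e/2) (-(d*x.2)/2) (-Real.pi) (Real.pi*x.2^2) x.1
    have hd2 : deriv (deriv (fun t : ℝ => B' (x.1, t))) x.2
        = (2*Real.pi*((-d/2)*x.2+(e*x.1/2)) + 4*Real.pi*x.2*(-d/2)
            + 4*Real.pi^2*x.2^2*((-d/2)*x.2+(e*x.1/2)))
          * Real.exp (Real.pi*x.2^2 + -Real.pi*x.1^2) := by
      rw [(hE2.deriv).deriv_eq]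
      exact deriv2_lin_exp (-d/2) (e*x.1/2) Real.pi (-Real.pi*x.1^2) x.2
    rw [Hop, hd1, hd2, hB,
      show Real.pi*x.2^2 + -Real.pi*x.1^2 = -Real.pi*x.1^2 + Real.pi*x.2^2 by ring]
    have hpi : (Real.pi : ℂ) ≠ 0 := Complex.ofReal_ne_zero.mpr Real.pi_ne_zero
    push_cast
    field_simp
    ring
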